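/- Let q > 1, τ* > 0, and 0 ≤ δ ≤ (2/(τ*)^q + 1)^(1 - 1/q). Then for all τ ∈ ℝ, |τ* - τ| + δ·(2 + |τ|^q)^(1/q) ≥ δ·(2 + (τ*)^q)^(1/q), i.e., the minimax value under homogeneous treatment effects is attained at τ* (delayed shrinkage). -/

import Mathlib

open Real Set

lemma deriv_bound (q τs δ : ℝ) (hq : 1 < q) (hτ : 0 < τs) (hδ0 : 0 ≤ δ)
    (hδ : δ ≤ (2 / τs ^ q + 1) ^ (1 - 1 / q)) {x : ℝ} (hx0 : 0 < x) (hxτ : x ≤ τs) :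
    δ * (x ^ (q - 1) * (2 + x ^ q) ^ (1 / q - 1)) ≤ 1 := by
  have hq0 : (0:ℝ) < q := by linarith
  have hB : 0 < τs ^ q := Real.rpow_pos_of_pos hτ q
  have hxq : 0 < x ^ q := Real.rpow_pos_of_pos hx0 q
  have hA : (0:ℝ) < 2 + τs ^ q := by linarith
  have hAx : (0:ℝ) < 2 + x ^ q := by linarith
  have he : (0:ℝ) ≤ 1 - 1 / q := by
    have : 1 / q < 1 := by rw [div_lt_one hq0]; linarith
    linarith
  have hδ' : δ ≤ ((2 + τs ^ q) / τs ^ q) ^ (1 - 1 / q) := by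
    rwa [div_add_one hB.ne'] at hδ
  have key : x ^ (q - 1) * (2 + x ^ q) ^ (1 / q - 1)
      = (x ^ q / (2 + x ^ q)) ^ (1 - 1 / q) := by
    rw [Real.div_rpow hxq.le hAx.le]
    have h1 : (x ^ q) ^ (1 - 1 / q) = x ^ (q - 1) := by
      rw [← Real.rpow_mul hx0.le]
      congr 1
      field_simp
    have h2 : (2 + x ^ q) ^ (1 / q - 1) = ((2 + x ^ q) ^ (1 - 1 / q))⁻¹ := by
      rw [show 1 / q - 1 = -(1 - 1 / q) by ring, Real.rpow_neg hAx.le]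
    rw [h1, h2]; ring
  rw [key]
  have hxqle : x ^ q ≤ τs ^ q := Real.rpow_le_rpow hx0.le hxτ hq0.le
  have hfrac : x ^ q / (2 + x ^ q) ≤ τs ^ q / (2 + τs ^ q) := by
    rw [div_le_div_iff₀ hAx hA]
    nlinarith
  have h3 : (x ^ q / (2 + x ^ q)) ^ (1 - 1 / q) ≤ (τs ^ q / (2 + τs ^ q)) ^ (1 - 1 / q) :=
    Real.rpow_le_rpow (by positivity) hfrac he
  calc δ * (x ^ q / (2 + x ^ q)) ^ (1 - 1 / q)
      ≤ ((2 + τs ^ q) / τs ^ q) ^ (1 - 1 / q) * (τs ^ q / (2 + τs ^ q)) ^ (1 - 1 / q) :=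
        mul_le_mul hδ' h3 (by positivity) (by positivity)
    _ = (((2 + τs ^ q) / τs ^ q) * (τs ^ q / (2 + τs ^ q))) ^ (1 - 1 / q) :=
        (Real.mul_rpow (by positivity) (by positivity)).symm
    _ = 1 := by
        rw [show ((2 + τs ^ q) / τs ^ q) * (τs ^ q / (2 + τs ^ q)) = 1 by
          field_simp]
        exact Real.one_rpow _

lemma key_mono (q τs δ : ℝ) (hq : 1 < q) (hτ : 0 < τs) (hδ0 : 0 ≤ δ)
    (hδ : δ ≤ (2 / τs ^ q + 1) ^ (1 - 1 / q)) :
    ∀ t ∈ Icc (0:ℝ) τs,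
      δ * (2 + τs ^ q) ^ (1 / q) - τs ≤ δ * (2 + t ^ q) ^ (1 / q) - t := by
  have hq0 : (0:ℝ) < q := by linarith
  set F : ℝ → ℝ := fun t => δ * (2 + t ^ q) ^ (1 / q) - t with hF
  have hcont : Continuous F := by
    have h1 : Continuous fun t : ℝ => t ^ q := by
      rw [continuous_iff_continuousAt]
      intro x
      exact Real.continuousAt_rpow_const x q (Or.inr hq0.le)
    have h2 : Continuous fun u : ℝ => u ^ (1 / q) := by
      rw [continuous_iff_continuousAt]
      intro x
      exact Real.continuousAt_rpow_const x (1 / q) (Or.inr (by positivity))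
    exact ((continuous_const.mul (h2.comp (continuous_const.add h1))).sub continuous_id)
  have hderiv : ∀ x ∈ Ioo (0:ℝ) τs,
      HasDerivAt F (δ * ((1 / q) * (2 + x ^ q) ^ (1 / q - 1) * (q * x ^ (q - 1))) - 1) x := by
    intro x hx
    have hxq : 0 < x ^ q := Real.rpow_pos_of_pos hx.1 q
    have hAx : (0:ℝ) < 2 + x ^ q := by linarith
    have h1 : HasDerivAt (fun t : ℝ => t ^ q) (q * x ^ (q - 1)) x :=
      Real.hasDerivAt_rpow_const (Or.inl hx.1.ne')
    have h2 : HasDerivAt (fun t : ℝ => 2 + t ^ q) (q * x ^ (q - 1)) x := h1.const_add 2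
    have h3 : HasDerivAt (fun u : ℝ => u ^ (1 / q)) ((1 / q) * (2 + x ^ q) ^ (1 / q - 1))
        (2 + x ^ q) := Real.hasDerivAt_rpow_const (Or.inl hAx.ne')
    have h4 := h3.comp x h2
    exact (h4.const_mul δ).sub (hasDerivAt_id x)
  have hanti : AntitoneOn F (Icc 0 τs) := by
    apply antitoneOn_of_deriv_nonpos (convex_Icc 0 τs) hcont.continuousOn
    · intro x hx
      rw [interior_Icc] at hx
      exact ((hderiv x hx).differentiableAt).differentiableWithinAt
    · intro x hx
      rw [interior_Icc] at hx
      rw [(hderiv x hx).deriv]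
      have hb := deriv_bound q τs δ hq hτ hδ0 hδ hx.1 hx.2.le
      have heq : (1 / q) * (2 + x ^ q) ^ (1 / q - 1) * (q * x ^ (q - 1))
          = x ^ (q - 1) * (2 + x ^ q) ^ (1 / q - 1) := by
        field_simp
      rw [heq]
      linarith
  intro t ht
  exact hanti ht (Set.right_mem_Icc.mpr (by linarith [ht.1, ht.2, hτ.le] )) ht.2

theorem stmt_7 (q τs δ : ℝ) (hq : 1 < q) (hτ : 0 < τs) (hδ0 : 0 ≤ δ)
    (hδ : δ ≤ (2 / τs ^ q + 1) ^ (1 - 1 / q)) :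
    ∀ τ : ℝ, |τs - τ| + δ * (2 + |τ| ^ q) ^ (1 / q) ≥ δ * (2 + τs ^ q) ^ (1 / q) := by
  intro τ
  have hq0 : (0:ℝ) < q := by linarith
  have ht0 : (0:ℝ) ≤ |τ| := abs_nonneg τ
  rcases le_or_gt τs |τ| with h | h
  · have hxq : τs ^ q ≤ |τ| ^ q := Real.rpow_le_rpow hτ.le h hq0.le
    have hmono : (2 + τs ^ q) ^ (1 / q) ≤ (2 + |τ| ^ q) ^ (1 / q) := by
      apply Real.rpow_le_rpow _ (by linarith) (by positivity)
      have : (0:ℝ) < τs ^ q := Real.rpow_pos_of_pos hτ q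
      linarith
    have habs : (0:ℝ) ≤ |τs - τ| := abs_nonneg _
    nlinarith [mul_le_mul_of_nonneg_left hmono hδ0]
  · have hm := key_mono q τs δ hq hτ hδ0 hδ |τ| ⟨ht0, h.le⟩
    have habs : τs - |τ| ≤ |τs - τ| := by
      have h1 : τ ≤ |τ| := le_abs_self τ
      have h2 : τs - τ ≤ |τs - τ| := le_abs_self _
      linarith
    linarith
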